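/- Fix A ∈ 𝔅 and a constant J_{0,A} ∈ ℝ, and assume the density of the coupling J_A is symmetric about J_{0,A}: P_A(J_{0,A} − x) = P_A(J_{0,A} + x) for all x ∈ ℝ. Then for every measurable even function f : ℝ → ℝ with f ≥ 0 (assuming all quenched averages below are finite), E[ (J_{0,A} − J_A) f(J_A − J_{0,A}) ⟨σ_A⟩_J ] ≥ E[ (J_{0,A} − J_A) f(J_A − J_{0,A}) tanh(β(J_A − J_{0,A})) ]. -/

import Mathlib

open MeasureTheory Real Finset ProbabilityTheory
open scoped ENNReal

/-- The spin value of a Boolean: `true ↦ 1`, `false ↦ -1`. -/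
noncomputable def spinVal (b : Bool) : ℝ := if b then 1 else -1

/-- `σ_B = ∏ i ∈ B, σ_i`. -/
noncomputable def sigmaSet {V : Type} (σ : V → Bool) (B : Finset V) : ℝ :=
  ∏ i ∈ B, spinVal (σ i)

/-- The Gibbs (thermal) average `⟨σ_A⟩_J` at inverse temperature `β` for the Hamiltonian
`H(σ) = -∑_{B ∈ ℬ} J_B σ_B`. -/
noncomputable def gibbsAvg {V : Type} [Fintype V] [DecidableEq V] (β : ℝ)
    (ℬ : Finset (Finset V)) (J : ℬ → ℝ) (A : Finset V) : ℝ :=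
  (∑ σ : V → Bool, sigmaSet σ A * Real.exp (β * ∑ B : ℬ, J B * sigmaSet σ (B : Finset V))) /
  (∑ σ : V → Bool, Real.exp (β * ∑ B : ℬ, J B * sigmaSet σ (B : Finset V)))

/-- The product measure `∏_{B ∈ ℬ} P_B(J_B) dJ_B` of the independent random couplings. -/
noncomputable def quenchedMeasure {V : Type} (ℬ : Finset (Finset V))
    (P : Finset V → ℝ → ℝ) : Measure (ℬ → ℝ) :=
  Measure.pi fun B => volume.withDensity fun x => ENNReal.ofReal (P (B : Finset V) x)

/- ### Auxiliary scalar lemmas -/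

lemma frac_identity (a b u v : ℝ) (ha : 0 < a) (hb : 0 < b) (hu : 0 < u) (hv : 0 < v) :
    (a * u - b * v) / (a * u + b * v) - (a * v - b * u) / (a * v + b * u)
      - 2 * ((u - v) / (u + v))
    = (-(2 * (u - v) * (u * v) * (a - b) ^ 2)) / ((u + v) * ((a * u + b * v) * (a * v + b * u))) := by
  have h1 : a * u + b * v ≠ 0 := by positivity
  have h2 : a * v + b * u ≠ 0 := by positivity
  have h3 : u + v ≠ 0 := by positivity
  field_simp
  ring

lemma key_ineq (a b x : ℝ) (ha : 0 < a) (hb : 0 < b) :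
    x * ((a * exp x - b * exp (-x)) / (a * exp x + b * exp (-x))
      - (a * exp (-x) - b * exp x) / (a * exp (-x) + b * exp x)
      - 2 * Real.tanh x) ≤ 0 := by
  have hu : (0:ℝ) < exp x := exp_pos x
  have hv : (0:ℝ) < exp (-x) := exp_pos (-x)
  have htanh : Real.tanh x = (exp x - exp (-x)) / (exp x + exp (-x)) := by
    rw [Real.tanh_eq_sinh_div_cosh, Real.sinh_eq, Real.cosh_eq]
    have : exp x + exp (-x) ≠ 0 := by positivity
    field_simp
  rw [htanh, frac_identity a b (exp x) (exp (-x)) ha hb hu hv, ← mul_div_assoc]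
  apply div_nonpos_of_nonpos_of_nonneg
  · have hx : 0 ≤ x * (exp x - exp (-x)) := by
      rcases le_or_gt 0 x with h | h
      · have : exp (-x) ≤ exp x := exp_le_exp.mpr (by linarith)
        exact mul_nonneg h (by linarith)
      · have : exp x ≤ exp (-x) := exp_le_exp.mpr (by linarith)
        nlinarith
    nlinarith [mul_pos hu hv, sq_nonneg (a - b),
      mul_nonneg (mul_nonneg hx (mul_pos hu hv).le) (sq_nonneg (a - b))]
  · positivity

lemma pointwise_scalar (a b β c u : ℝ) (ha : 0 < a) (hb : 0 < b) (hβ : 0 < β) :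
    (-2) * ((u - c) * Real.tanh (β * (u - c)))
      ≤ (c - u) * ((a * exp (β * u) - b * exp (-(β * u)))
            / (a * exp (β * u) + b * exp (-(β * u))))
        + (u - c) * ((a * exp (β * (2 * c - u)) - b * exp (-(β * (2 * c - u))))
            / (a * exp (β * (2 * c - u)) + b * exp (-(β * (2 * c - u))))) := by
  set a' := a * exp (β * c) with ha'd
  set b' := b * exp (-(β * c)) with hb'd
  have ha' : 0 < a' := by positivity
  have hb' : 0 < b' := by positivity
  set x := β * (u - c) with hx
  have e1 : β * u = β * c + x := by rw [hx]; ring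
  have e2 : -(β * u) = -(β * c) + -x := by rw [hx]; ring
  have e3 : β * (2 * c - u) = β * c + -x := by rw [hx]; ring
  have e4 : -(β * (2 * c - u)) = -(β * c) + x := by rw [hx]; ring
  rw [e2, e1, e4, e3, exp_add, exp_add, exp_add, exp_add]
  have f1 : (a * (exp (β * c) * exp x) - b * (exp (-(β * c)) * exp (-x)))
        / (a * (exp (β * c) * exp x) + b * (exp (-(β * c)) * exp (-x)))
      = (a' * exp x - b' * exp (-x)) / (a' * exp x + b' * exp (-x)) := by
    rw [ha'd, hb'd]; ring_nf
  have f2 : (a * (exp (β * c) * exp (-x)) - b * (exp (-(β * c)) * exp x))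
        / (a * (exp (β * c) * exp (-x)) + b * (exp (-(β * c)) * exp x))
      = (a' * exp (-x) - b' * exp x) / (a' * exp (-x) + b' * exp x) := by
    rw [ha'd, hb'd]; ring_nf
  rw [f1, f2]
  have key := key_ineq a' b' x ha' hb'
  have keyE : β * ((u - c) *
      ((a' * exp x - b' * exp (-x)) / (a' * exp x + b' * exp (-x))
        - (a' * exp (-x) - b' * exp x) / (a' * exp (-x) + b' * exp x)
        - 2 * Real.tanh x)) ≤ β * 0 := by
    rw [mul_zero, show β * ((u - c) *
      ((a' * exp x - b' * exp (-x)) / (a' * exp x + b' * exp (-x))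
        - (a' * exp (-x) - b' * exp x) / (a' * exp (-x) + b' * exp x)
        - 2 * Real.tanh x)) = x *
      ((a' * exp x - b' * exp (-x)) / (a' * exp x + b' * exp (-x))
        - (a' * exp (-x) - b' * exp x) / (a' * exp (-x) + b' * exp x)
        - 2 * Real.tanh x) from by rw [hx]; ring]
    exact key
  have hE := le_of_mul_le_mul_left keyE hβ
  nlinarith [hE]

/- ### Auxiliary lemmas on `sigmaSet` and `gibbsAvg` -/

lemma sigmaSet_sq {V : Type} (σ : V → Bool) (B : Finset V) :
    sigmaSet σ B = 1 ∨ sigmaSet σ B = -1 := by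
  rw [← mul_self_eq_one_iff]
  unfold sigmaSet
  rw [← Finset.prod_mul_distrib]
  apply Finset.prod_eq_one
  intro i _
  cases σ i <;> simp [spinVal]

lemma sigmaSet_true {V : Type} (B : Finset V) :
    sigmaSet (fun _ => true) B = 1 := by
  unfold sigmaSet; apply Finset.prod_eq_one; intro i _; simp [spinVal]

lemma sigmaSet_single {V : Type} [DecidableEq V] (B : Finset V) (i₀ : V) (hi₀ : i₀ ∈ B) :
    sigmaSet (fun i => decide (i ≠ i₀)) B = -1 := by
  unfold sigmaSet
  rw [Finset.prod_eq_single_of_mem i₀ hi₀]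
  · simp [spinVal]
  · intro j _ hj
    simp [spinVal, hj]

lemma gibbs_rep {V : Type} [Fintype V] [DecidableEq V] (β : ℝ) (ℬ : Finset (Finset V))
    (A : Finset V) (hA : A ∈ ℬ) (hAne : A.Nonempty) (J : ℬ → ℝ) :
    ∃ a b : ℝ, 0 < a ∧ 0 < b ∧ ∀ w : ℝ,
      gibbsAvg β ℬ (Function.update J ⟨A, hA⟩ w) A
        = (a * Real.exp (β * w) - b * Real.exp (-(β * w)))
          / (a * Real.exp (β * w) + b * Real.exp (-(β * w))) := by
  classical
  set A₀ : ℬ := ⟨A, hA⟩ with hA₀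
  set R : (V → Bool) → ℝ := fun σ => ∑ B ∈ Finset.univ.erase A₀, J B * sigmaSet σ (B : Finset V)
    with hR
  refine ⟨∑ σ : V → Bool, (1 + sigmaSet σ A) / 2 * Real.exp (β * R σ),
    ∑ σ : V → Bool, (1 - sigmaSet σ A) / 2 * Real.exp (β * R σ), ?_, ?_, ?_⟩
  · apply Finset.sum_pos'
    · intro σ _
      rcases sigmaSet_sq σ A with h | h <;> rw [h] <;> positivity
    · refine ⟨fun _ => true, Finset.mem_univ _, ?_⟩
      rw [sigmaSet_true]
      positivity
  · apply Finset.sum_pos'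
    · intro σ _
      rcases sigmaSet_sq σ A with h | h <;> rw [h] <;> positivity
    · obtain ⟨i₀, hi₀⟩ := hAne
      refine ⟨fun i => decide (i ≠ i₀), Finset.mem_univ _, ?_⟩
      rw [sigmaSet_single A i₀ hi₀]
      positivity
  · intro w
    have hsum : ∀ σ : V → Bool,
        ∑ B : ℬ, Function.update J A₀ w B * sigmaSet σ (B : Finset V)
          = w * sigmaSet σ A + R σ := by
      intro σ
      rw [← Finset.add_sum_erase _ _ (Finset.mem_univ A₀)]
      congr 1
      · rw [Function.update_self]
      · exact Finset.sum_congr rfl fun B hB => by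
          rw [Function.update_of_ne (Finset.ne_of_mem_erase hB)]
    unfold gibbsAvg
    have hden : (∑ σ : V → Bool,
        Real.exp (β * ∑ B : ℬ, Function.update J A₀ w B * sigmaSet σ (B : Finset V)))
        = (∑ σ : V → Bool, (1 + sigmaSet σ A) / 2 * Real.exp (β * R σ)) * Real.exp (β * w)
          + (∑ σ : V → Bool, (1 - sigmaSet σ A) / 2 * Real.exp (β * R σ))
            * Real.exp (-(β * w)) := by
      rw [Finset.sum_mul, Finset.sum_mul, ← Finset.sum_add_distrib]
      apply Finset.sum_congr rfl
      intro σ _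
      rw [hsum σ]
      rcases sigmaSet_sq σ A with h | h <;> rw [h]
      · rw [show β * (w * 1 + R σ) = β * w + β * R σ by ring, Real.exp_add]; ring
      · rw [show β * (w * (-1) + R σ) = -(β * w) + β * R σ by ring, Real.exp_add]; ring
    have hnum : (∑ σ : V → Bool, sigmaSet σ A *
        Real.exp (β * ∑ B : ℬ, Function.update J A₀ w B * sigmaSet σ (B : Finset V)))
        = (∑ σ : V → Bool, (1 + sigmaSet σ A) / 2 * Real.exp (β * R σ)) * Real.exp (β * w)
          - (∑ σ : V → Bool, (1 - sigmaSet σ A) / 2 * Real.exp (β * R σ))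
            * Real.exp (-(β * w)) := by
      rw [Finset.sum_mul, Finset.sum_mul, ← Finset.sum_sub_distrib]
      apply Finset.sum_congr rfl
      intro σ _
      rw [hsum σ]
      rcases sigmaSet_sq σ A with h | h <;> rw [h]
      · rw [show β * (w * 1 + R σ) = β * w + β * R σ by ring, Real.exp_add]; ring
      · rw [show β * (w * (-1) + R σ) = -(β * w) + β * R σ by ring, Real.exp_add]; ring
    rw [hden, hnum]

/- ### Auxiliary measure-theoretic lemma -/

lemma refl_preserving (c : ℝ) (g : ℝ → ℝ≥0∞) (hg : Measurable g)
    (hsym : ∀ x, g (2 * c - x) = g x) :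
    MeasurePreserving (fun x : ℝ => 2 * c - x)
      (volume.withDensity g) (volume.withDensity g) := by
  have hT : Measurable (fun x : ℝ => 2 * c - x) := by fun_prop
  have hvol : MeasurePreserving (fun x : ℝ => 2 * c - x)
      (volume : Measure ℝ) volume :=
    Measure.measurePreserving_sub_left volume (2 * c)
  refine ⟨hT, ?_⟩
  ext s hs
  rw [Measure.map_apply hT hs, withDensity_apply _ (hT hs), withDensity_apply _ hs]
  have h2 := setLIntegral_map hs hg hT (μ := (volume : Measure ℝ))
  rw [hvol.map_eq] at h2
  rw [h2]
  apply setLIntegral_congr_fun (hT hs)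
  intro x _
  exact (hsym x).symm

/-- **Corollary (distribution symmetric about `J_{0,A}`).** If
`P_A(J_{0,A} - x) = P_A(J_{0,A} + x)`, then for every nonnegative measurable even `f`,
`E[(J_{0,A} - J_A) f(J_A - J_{0,A}) ⟨σ_A⟩_J]
  ≥ E[(J_{0,A} - J_A) f(J_A - J_{0,A}) tanh(β(J_A - J_{0,A}))]`. -/
theorem local_energy_lower_bound_shifted_symmetric
    {V : Type} [Fintype V] [DecidableEq V]
    (ℬ : Finset (Finset V)) (hℬ : ∀ B ∈ ℬ, B.Nonempty)
    (β : ℝ) (hβ : 0 < β)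
    (P : Finset V → ℝ → ℝ)
    (hPmeas : ∀ B, Measurable (P B))
    (hPnonneg : ∀ B x, 0 ≤ P B x)
    (hPone : ∀ B, ∫ x, P B x = 1)
    (A : Finset V) (hA : A ∈ ℬ)
    (J0A : ℝ)
    (hPsym : ∀ x : ℝ, P A (J0A - x) = P A (J0A + x))
    (f : ℝ → ℝ) (hfmeas : Measurable f) (hfeven : ∀ x, f (-x) = f x)
    (hfnonneg : ∀ x, 0 ≤ f x)
    -- finiteness of the quenched averages
    (hint1 : Integrable
      (fun J : ℬ → ℝ => (J0A - J ⟨A, hA⟩) * f (J ⟨A, hA⟩ - J0A) * gibbsAvg β ℬ J A)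
      (quenchedMeasure ℬ P))
    (hint2 : Integrable
      (fun J : ℬ → ℝ =>
        (J0A - J ⟨A, hA⟩) * f (J ⟨A, hA⟩ - J0A) * Real.tanh (β * (J ⟨A, hA⟩ - J0A)))
      (quenchedMeasure ℬ P)) :
    ∫ J, (J0A - J ⟨A, hA⟩) * f (J ⟨A, hA⟩ - J0A) * gibbsAvg β ℬ J A ∂(quenchedMeasure ℬ P)
      ≥ ∫ J, (J0A - J ⟨A, hA⟩) * f (J ⟨A, hA⟩ - J0A)
          * Real.tanh (β * (J ⟨A, hA⟩ - J0A)) ∂(quenchedMeasure ℬ P) := by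
  classical
  set A₀ : ℬ := ⟨A, hA⟩ with hA₀def
  set ν : ℬ → Measure ℝ :=
    fun B => volume.withDensity fun x => ENNReal.ofReal (P (B : Finset V) x) with hνdef
  have hνprob : ∀ B : ℬ, IsProbabilityMeasure (ν B) := by
    intro B
    have hPint : Integrable (P (B : Finset V)) (volume : Measure ℝ) := by
      by_contra h
      have h1 := hPone (B : Finset V)
      rw [integral_undef h] at h1
      norm_num at h1
    constructor
    rw [hνdef]
    rw [withDensity_apply _ MeasurableSet.univ, Measure.restrict_univ,
      ← ofReal_integral_eq_lintegral_ofReal hPint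
        (Filter.Eventually.of_forall (hPnonneg _)), hPone, ENNReal.ofReal_one]
  haveI : ∀ B : ℬ, SigmaFinite (ν B) := fun B => by
    have := hνprob B; infer_instance
  have hμeq : quenchedMeasure ℬ P = Measure.pi ν := rfl
  set φ : ℬ → ℝ → ℝ := fun B y => if B = A₀ then 2 * J0A - y else y with hφdef
  set flip : (ℬ → ℝ) → (ℬ → ℝ) := fun J B => φ B (J B) with hflipdef
  have hφmp : ∀ B : ℬ, MeasurePreserving (φ B) (ν B) (ν B) := by
    intro B
    by_cases h : B = A₀
    · subst h
      have hφeq : φ A₀ = fun y => 2 * J0A - y := by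
        funext y; simp [hφdef]
      rw [hφeq]
      have hgsym : ∀ x : ℝ,
          ENNReal.ofReal (P ((A₀ : Finset V)) (2 * J0A - x))
            = ENNReal.ofReal (P ((A₀ : Finset V)) x) := by
        intro x
        have h1 : 2 * J0A - x = J0A - (x - J0A) := by ring
        have h2 : J0A + (x - J0A) = x := by ring
        show ENNReal.ofReal (P A (2 * J0A - x)) = ENNReal.ofReal (P A x)
        rw [h1, hPsym (x - J0A), h2]
      exact refl_preserving J0A _ ((hPmeas _).ennreal_ofReal) hgsym
    · have hφeq : φ B = id := by funext y; simp [hφdef, h]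
      rw [hφeq]
      exact MeasurePreserving.id _
  have hmp : MeasurePreserving flip (quenchedMeasure ℬ P) (quenchedMeasure ℬ P) := by
    rw [hμeq]
    exact measurePreserving_pi ν ν hφmp
  have hinv : ∀ J : ℬ → ℝ, flip (flip J) = J := by
    intro J
    funext B
    by_cases h : B = A₀ <;> simp [hflipdef, hφdef, h]
  set e : (ℬ → ℝ) ≃ᵐ (ℬ → ℝ) :=
    ⟨⟨flip, flip, hinv, hinv⟩, hmp.measurable, hmp.measurable⟩ with hedef
  set g1 : (ℬ → ℝ) → ℝ :=
    fun J => (J0A - J A₀) * f (J A₀ - J0A) * gibbsAvg β ℬ J A with hg1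
  set g2 : (ℬ → ℝ) → ℝ :=
    fun J => (J0A - J A₀) * f (J A₀ - J0A) * Real.tanh (β * (J A₀ - J0A)) with hg2
  have hflipA : ∀ J : ℬ → ℝ, flip J A₀ = 2 * J0A - J A₀ := by
    intro J; simp [hflipdef, hφdef]
  -- pointwise inequality
  have hpt : ∀ J : ℬ → ℝ, g2 J + g2 (flip J) ≤ g1 J + g1 (flip J) := by
    intro J
    obtain ⟨a, b, ha, hb, hrep⟩ := gibbs_rep β ℬ A hA (hℬ A hA) J
    have hupd : Function.update J A₀ (J A₀) = J := Function.update_eq_self A₀ J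
    have hflipJ : flip J = Function.update J A₀ (2 * J0A - J A₀) := by
      funext B
      by_cases h : B = A₀
      · subst h; rw [Function.update_self]; simp [hflipdef, hφdef]
      · rw [Function.update_of_ne h]; simp [hflipdef, hφdef, h]
    have hG1 : gibbsAvg β ℬ J A
        = (a * Real.exp (β * J A₀) - b * Real.exp (-(β * J A₀)))
          / (a * Real.exp (β * J A₀) + b * Real.exp (-(β * J A₀))) := by
      have h1 := hrep (J A₀)
      rwa [hupd] at h1
    have hG2 : gibbsAvg β ℬ (flip J) A
        = (a * Real.exp (β * (2 * J0A - J A₀)) - b * Real.exp (-(β * (2 * J0A - J A₀))))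
          / (a * Real.exp (β * (2 * J0A - J A₀))
              + b * Real.exp (-(β * (2 * J0A - J A₀)))) := by
      have h1 := hrep (2 * J0A - J A₀)
      rwa [← hflipJ] at h1
    have hkey := pointwise_scalar a b β J0A (J A₀) ha hb hβ
    simp only [hg1, hg2]
    rw [hflipA J, hG1, hG2]
    have hf1 : f (2 * J0A - J A₀ - J0A) = f (J A₀ - J0A) := by
      rw [show 2 * J0A - J A₀ - J0A = -(J A₀ - J0A) by ring, hfeven]
    have ht : Real.tanh (β * (2 * J0A - J A₀ - J0A)) = -Real.tanh (β * (J A₀ - J0A)) := by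
      rw [show β * (2 * J0A - J A₀ - J0A) = -(β * (J A₀ - J0A)) by ring, Real.tanh_neg]
    rw [hf1, ht]
    have hf0 : 0 ≤ f (J A₀ - J0A) := hfnonneg _
    nlinarith [mul_le_mul_of_nonneg_left hkey hf0]
  -- transfer integrability along the flip
  have hint1' : Integrable (fun J => g1 (flip J)) (quenchedMeasure ℬ P) :=
    (hmp.integrable_comp_emb e.measurableEmbedding).mpr hint1
  have hint2' : Integrable (fun J => g2 (flip J)) (quenchedMeasure ℬ P) :=
    (hmp.integrable_comp_emb e.measurableEmbedding).mpr hint2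
  have hI1 : ∫ J, g1 (flip J) ∂(quenchedMeasure ℬ P)
      = ∫ J, g1 J ∂(quenchedMeasure ℬ P) :=
    hmp.integral_comp e.measurableEmbedding g1
  have hI2 : ∫ J, g2 (flip J) ∂(quenchedMeasure ℬ P)
      = ∫ J, g2 J ∂(quenchedMeasure ℬ P) :=
    hmp.integral_comp e.measurableEmbedding g2
  have hmono : ∫ J, (g2 J + g2 (flip J)) ∂(quenchedMeasure ℬ P)
      ≤ ∫ J, (g1 J + g1 (flip J)) ∂(quenchedMeasure ℬ P) :=
    integral_mono (hint2.add hint2') (hint1.add hint1') hpt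
  rw [integral_add hint2 hint2', integral_add hint1 hint1', hI1, hI2] at hmono
  linarith
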